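/- Let $\{a_n\},\{b_n\},\{c_n\},\{d_n\}$ be real sequences with $1\le a_n\le b_n$ for all $n$, and $\psi:\mathbb{N}\to[0,\infty)$. If $\sum_{n:\psi(n)>0}\big[\psi(n)\log\frac{1}{\psi(n)}+\frac{\psi(n)}{a_n}\log b_n\log\frac{1}{\psi(n)}+(\psi(n)a_n/b_n)^{1/2}+(\psi(n)/(a_nb_n))^{1/2}\log b_n\big]<\infty$, then the Lebesgue measure of $M(\psi)=\{x\in[0,1]:\|a_nx+c_n\|\cdot\|b_nx+d_n\|<\psi(n)\text{ for infinitely many }n\}$ is zero. -/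

import Mathlib

open Set MeasureTheory

/-- Distance from `x` to the nearest integer. -/
noncomputable def nint (x : ℝ) : ℝ := |x - round x|

/-- `log` with the convention that `log x = 1` for `x ≤ e`. -/
noncomputable def clog (x : ℝ) : ℝ := max 1 (Real.log x)

open scoped ENNReal


lemma nint_nonneg (x : ℝ) : 0 ≤ nint x := abs_nonneg _
lemma nint_le_half (x : ℝ) : nint x ≤ 1/2 := abs_sub_round x

lemma card_Icc_le {A B : ℝ} (h : A ≤ B + 1) :
    ((Finset.Icc ⌈A⌉ ⌊B⌋).card : ℝ) ≤ B - A + 1 := by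
  rw [Int.card_Icc]
  rcases le_or_gt ⌈A⌉ ⌊B⌋ with h1 | h1
  · have h2 : (0:ℤ) ≤ ⌊B⌋ + 1 - ⌈A⌉ := by omega
    have h3 : ((⌊B⌋ + 1 - ⌈A⌉).toNat : ℝ) = (⌊B⌋:ℝ) + 1 - ⌈A⌉ := by
      exact_mod_cast Int.toNat_of_nonneg h2
    rw [h3]
    have := Int.le_ceil A
    have := Int.floor_le B
    linarith
  · have h2 : ⌊B⌋ + 1 - ⌈A⌉ ≤ 0 := by omega
    simp only [Int.toNat_of_nonpos h2]
    push_cast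
    linarith

lemma cover_lemma {β δ s t : ℝ} (hβ : 0 < β) (dd : ℝ) :
    {x ∈ Icc s t | nint (β*x + dd) < δ} ⊆
      ⋃ m ∈ Finset.Icc ⌈β*s + dd - δ⌉ ⌊β*t + dd + δ⌋,
        Ioo (((m:ℝ) - δ - dd)/β) (((m:ℝ) + δ - dd)/β) := by
  rintro x ⟨⟨hxs, hxt⟩, hx⟩
  have habs : |β*x + dd - round (β*x + dd)| < δ := hx
  rw [abs_lt] at habs
  set m : ℤ := round (β*x + dd) with hm
  have hys : β*s + dd ≤ β*x + dd := by nlinarith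
  have hyt : β*x + dd ≤ β*t + dd := by nlinarith
  refine Set.mem_iUnion₂.2 ⟨m, ?_, ?_⟩
  · rw [Finset.mem_Icc]
    constructor
    · rw [Int.ceil_le]; linarith [habs.1, habs.2]
    · rw [Int.le_floor]; linarith [habs.1, habs.2]
  · constructor
    · rw [div_lt_iff₀ hβ]; linarith [habs.1, habs.2]
    · rw [lt_div_iff₀ hβ]; linarith [habs.1, habs.2]

lemma strip_measure {β dd δ s t : ℝ} (hβ : 1 ≤ β) (hδ0 : 0 < δ) (hδ1 : δ ≤ 1) (hst : s ≤ t) :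
    volume {x ∈ Icc s t | nint (β*x + dd) < δ} ≤
      ENNReal.ofReal ((β*(t-s) + 3) * (2*δ/β)) := by
  have hβ0 : 0 < β := lt_of_lt_of_le one_pos hβ
  set F := Finset.Icc ⌈β*s + dd - δ⌉ ⌊β*t + dd + δ⌋ with hF
  calc volume {x ∈ Icc s t | nint (β*x + dd) < δ}
      ≤ volume (⋃ m ∈ F, Ioo (((m:ℝ) - δ - dd)/β) (((m:ℝ) + δ - dd)/β)) :=
        measure_mono (cover_lemma hβ0 dd)
    _ ≤ ∑ m ∈ F, volume (Ioo (((m:ℝ) - δ - dd)/β) (((m:ℝ) + δ - dd)/β)) :=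
        measure_biUnion_finset_le F _
    _ = ∑ m ∈ F, ENNReal.ofReal (2*δ/β) := by
        refine Finset.sum_congr rfl fun m _ => ?_
        rw [Real.volume_Ioo]
        congr 1
        field_simp
        ring
    _ = (F.card : ℝ≥0∞) * ENNReal.ofReal (2*δ/β) := by
        rw [Finset.sum_const, nsmul_eq_mul]
    _ ≤ ENNReal.ofReal ((β*(t-s) + 3) * (2*δ/β)) := by
        rw [← ENNReal.ofReal_natCast, ← ENNReal.ofReal_mul (by positivity)]
        apply ENNReal.ofReal_le_ofReal
        apply mul_le_mul_of_nonneg_right _ (by positivity)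
        have hcard : ((F.card : ℕ) : ℝ) ≤ (β*t + dd + δ) - (β*s + dd - δ) + 1 := by
          apply card_Icc_le
          nlinarith
        calc ((F.card : ℕ) : ℝ) ≤ (β*t + dd + δ) - (β*s + dd - δ) + 1 := hcard
          _ = β*(t-s) + 2*δ + 1 := by ring
          _ ≤ β*(t-s) + 3 := by linarith
lemma double_measure {aa bb cc dd δ1 δ2 : ℝ} (ha : 1 ≤ aa) (hab : aa ≤ bb)
    (h10 : 0 < δ1) (h11 : δ1 ≤ 1) (h20 : 0 < δ2) (h21 : δ2 ≤ 1) :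
    volume {x ∈ Icc (0:ℝ) 1 | nint (aa*x + cc) < δ1 ∧ nint (bb*x + dd) < δ2} ≤
      ENNReal.ofReal (16*δ1*δ2 + 24*(aa/bb)*δ2) := by
  have ha0 : 0 < aa := lt_of_lt_of_le one_pos ha
  have hb1 : 1 ≤ bb := le_trans ha hab
  have hb0 : 0 < bb := lt_of_lt_of_le one_pos hb1
  set F := Finset.Icc ⌈aa*0 + cc - δ1⌉ ⌊aa*1 + cc + δ1⌋ with hF
  have hsub : {x ∈ Icc (0:ℝ) 1 | nint (aa*x + cc) < δ1 ∧ nint (bb*x + dd) < δ2} ⊆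
      ⋃ m ∈ F, {x ∈ Icc (((m:ℝ) - δ1 - cc)/aa) (((m:ℝ) + δ1 - cc)/aa) | nint (bb*x + dd) < δ2} := by
    rintro x ⟨hxI, hx1, hx2⟩
    have h := cover_lemma (δ := δ1) (s := (0:ℝ)) (t := 1) ha0 cc ⟨hxI, hx1⟩
    rcases Set.mem_iUnion₂.1 h with ⟨m, hm, hmem⟩
    exact Set.mem_iUnion₂.2 ⟨m, hm, ⟨Ioo_subset_Icc_self hmem, hx2⟩⟩
  have hper : ∀ m : ℤ, volume {x ∈ Icc (((m:ℝ) - δ1 - cc)/aa) (((m:ℝ) + δ1 - cc)/aa) |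
      nint (bb*x + dd) < δ2} ≤ ENNReal.ofReal ((bb*(2*δ1/aa) + 3) * (2*δ2/bb)) := by
    intro m
    have hle : ((m:ℝ) - δ1 - cc)/aa ≤ ((m:ℝ) + δ1 - cc)/aa := by
      gcongr <;> linarith
    have hdiff : ((m:ℝ) + δ1 - cc)/aa - ((m:ℝ) - δ1 - cc)/aa = 2*δ1/aa := by
      field_simp
      ring
    have := strip_measure (β := bb) (dd := dd) hb1 h20 h21 hle
    rwa [hdiff] at this
  calc volume {x ∈ Icc (0:ℝ) 1 | nint (aa*x + cc) < δ1 ∧ nint (bb*x + dd) < δ2}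
      ≤ volume (⋃ m ∈ F, {x ∈ Icc (((m:ℝ) - δ1 - cc)/aa) (((m:ℝ) + δ1 - cc)/aa) |
          nint (bb*x + dd) < δ2}) := measure_mono hsub
    _ ≤ ∑ m ∈ F, volume {x ∈ Icc (((m:ℝ) - δ1 - cc)/aa) (((m:ℝ) + δ1 - cc)/aa) |
          nint (bb*x + dd) < δ2} := measure_biUnion_finset_le F _
    _ ≤ ∑ m ∈ F, ENNReal.ofReal ((bb*(2*δ1/aa) + 3) * (2*δ2/bb)) :=
        Finset.sum_le_sum fun m _ => hper m
    _ = (F.card : ℝ≥0∞) * ENNReal.ofReal ((bb*(2*δ1/aa) + 3) * (2*δ2/bb)) := by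
        rw [Finset.sum_const, nsmul_eq_mul]
    _ ≤ ENNReal.ofReal (16*δ1*δ2 + 24*(aa/bb)*δ2) := by
        rw [← ENNReal.ofReal_natCast, ← ENNReal.ofReal_mul (by positivity)]
        apply ENNReal.ofReal_le_ofReal
        have hcard : ((F.card : ℕ) : ℝ) ≤ (aa*1 + cc + δ1) - (aa*0 + cc - δ1) + 1 :=
          card_Icc_le (by nlinarith)
        have hcard4 : ((F.card : ℕ) : ℝ) ≤ 4*aa := by
          calc ((F.card : ℕ) : ℝ) ≤ (aa*1 + cc + δ1) - (aa*0 + cc - δ1) + 1 := hcard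
            _ = aa + 2*δ1 + 1 := by ring
            _ ≤ 4*aa := by linarith
        have hP : (0:ℝ) ≤ (bb*(2*δ1/aa) + 3) * (2*δ2/bb) := by positivity
        calc ((F.card : ℕ) : ℝ) * ((bb*(2*δ1/aa) + 3) * (2*δ2/bb))
            ≤ 4*aa * ((bb*(2*δ1/aa) + 3) * (2*δ2/bb)) :=
              mul_le_mul_of_nonneg_right hcard4 hP
          _ = 16*δ1*δ2 + 24*(aa/bb)*δ2 := by
              field_simp
              ring
lemma sum_min_le {y : ℝ} (hy : 0 ≤ y) (M K : ℕ) :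
    ∑ k ∈ Finset.range K, min ((2:ℝ)⁻¹^k) y ≤ y*M + 2*(2:ℝ)⁻¹^M := by
  have hpow : (0:ℝ) < (2:ℝ)⁻¹^M := by positivity
  rcases le_or_gt K M with h | h
  · calc ∑ k ∈ Finset.range K, min ((2:ℝ)⁻¹^k) y
        ≤ ∑ _k ∈ Finset.range K, y := Finset.sum_le_sum fun k _ => min_le_right _ _
      _ = (K:ℝ)*y := by rw [Finset.sum_const, Finset.card_range, nsmul_eq_mul]
      _ ≤ y*M + 2*(2:ℝ)⁻¹^M := by
          have : (K:ℝ) ≤ (M:ℝ) := by exact_mod_cast h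
          nlinarith
  · rw [← Finset.sum_range_add_sum_Ico _ (le_of_lt h)]
    have h1 : ∑ k ∈ Finset.range M, min ((2:ℝ)⁻¹^k) y ≤ y*M := by
      calc ∑ k ∈ Finset.range M, min ((2:ℝ)⁻¹^k) y
          ≤ ∑ _k ∈ Finset.range M, y := Finset.sum_le_sum fun k _ => min_le_right _ _
        _ = y*M := by rw [Finset.sum_const, Finset.card_range, nsmul_eq_mul]; ring
    have h2 : ∑ k ∈ Finset.Ico M K, min ((2:ℝ)⁻¹^k) y ≤ 2*(2:ℝ)⁻¹^M := by
      calc ∑ k ∈ Finset.Ico M K, min ((2:ℝ)⁻¹^k) y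
          ≤ ∑ k ∈ Finset.Ico M K, (2:ℝ)⁻¹^k := Finset.sum_le_sum fun k _ => min_le_left _ _
        _ = ((2:ℝ)⁻¹^K - (2:ℝ)⁻¹^M)/((2:ℝ)⁻¹ - 1) := geom_sum_Ico (by norm_num) (le_of_lt h)
        _ ≤ 2*(2:ℝ)⁻¹^M := by
            have hK' : (0:ℝ) ≤ (2:ℝ)⁻¹^K := by positivity
            rw [div_le_iff_of_neg (by norm_num : (2:ℝ)⁻¹ - 1 < 0)]
            nlinarith
    linarith
lemma pow_inv_eq (m : ℕ) : (2:ℝ)⁻¹^m = (2:ℝ)^(-(m:ℤ)) := by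
  rw [zpow_neg, zpow_natCast, inv_pow]

set_option maxHeartbeats 1000000 in
lemma main_bound {aa bb cc dd ψ : ℝ} (ha : 1 ≤ aa) (hab : aa ≤ bb) (hψ : 0 < ψ) :
    volume {x ∈ Icc (0:ℝ) 1 | nint (aa*x+cc) * nint (bb*x+dd) < ψ} ≤
      ENNReal.ofReal (300 * (ψ * clog (1/ψ) + Real.sqrt (ψ*aa/bb))) := by
  classical
  have ha0 : 0 < aa := lt_of_lt_of_le one_pos ha
  have hb0 : 0 < bb := lt_of_lt_of_le one_pos (le_trans ha hab)
  have hclog : 1 ≤ clog (1/ψ) := le_max_left _ _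
  set ε := Real.sqrt (ψ*aa/bb) with hεdef
  have hε0 : 0 < ε := Real.sqrt_pos.2 (by positivity)
  have hεsq : ε^2 = ψ*aa/bb := Real.sq_sqrt (by positivity)
  have hψclog : 0 ≤ ψ * clog (1/ψ) := mul_nonneg hψ.le (le_trans zero_le_one hclog)
  have hvol1 : volume {x ∈ Icc (0:ℝ) 1 | nint (aa*x+cc) * nint (bb*x+dd) < ψ} ≤ 1 := by
    calc volume {x ∈ Icc (0:ℝ) 1 | nint (aa*x+cc) * nint (bb*x+dd) < ψ}
        ≤ volume (Icc (0:ℝ) 1) := measure_mono (sep_subset _ _)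
      _ = 1 := by rw [Real.volume_Icc]; norm_num
  by_cases hψ4 : (1:ℝ)/4 ≤ ψ
  · refine le_trans hvol1 ?_
    rw [← ENNReal.ofReal_one]
    apply ENNReal.ofReal_le_ofReal
    nlinarith
  push_neg at hψ4
  by_cases hεhalf : (1:ℝ)/2 ≤ ε
  · refine le_trans hvol1 ?_
    rw [← ENNReal.ofReal_one]
    apply ENNReal.ofReal_le_ofReal
    nlinarith
  push_neg at hεhalf
  -- dyadic index K for ε
  obtain ⟨n, hn1, hn2⟩ := exists_mem_Ico_zpow hε0 one_lt_two
  have hn : n ≤ -2 := by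
    by_contra hcon
    push_neg at hcon
    have : (2:ℝ)^(-1:ℤ) ≤ (2:ℝ)^n := zpow_le_zpow_right₀ one_le_two (by omega)
    rw [show ((2:ℝ)^(-1:ℤ)) = 1/2 by norm_num] at this
    linarith
  set K := (-n-1).toNat with hKdef
  have hKn : (K:ℤ) = -n-1 := Int.toNat_of_nonneg (by omega)
  have hK1 : 1 ≤ K := by omega
  have hεlow : (2:ℝ)⁻¹^(K+1) ≤ ε := by
    rw [pow_inv_eq]
    have : -((K:ℤ)+1) = n := by omega
    rw [show (-(((K+1):ℕ):ℤ)) = n by push_cast; omega]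
    exact hn1
  have hεhigh : ε < (2:ℝ)⁻¹^K := by
    rw [pow_inv_eq, show (-((K:ℕ):ℤ)) = n+1 by omega]
    exact hn2
  -- dyadic index M for ψ
  obtain ⟨p, hp1, hp2⟩ := exists_mem_Ico_zpow hψ one_lt_two
  have hp : p ≤ -3 := by
    by_contra hcon
    push_neg at hcon
    have : (2:ℝ)^(-2:ℤ) ≤ (2:ℝ)^p := zpow_le_zpow_right₀ one_le_two (by omega)
    rw [show ((2:ℝ)^(-2:ℤ)) = 1/4 by norm_num] at this
    linarith
  set M := (-p).toNat with hMdef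
  have hMp : (M:ℤ) = -p := Int.toNat_of_nonneg (by omega)
  have hMψ : (2:ℝ)⁻¹^M ≤ ψ := by
    rw [pow_inv_eq, show (-((M:ℕ):ℤ)) = p by omega]
    exact hp1
  have hMbound : (M:ℝ) ≤ 3 * clog (1/ψ) := by
    have h2p : (0:ℝ) < (2:ℝ)^p := zpow_pos (by norm_num) p
    have hM2 : (2:ℝ)^(M:ℕ) < 2/ψ := by
      rw [← zpow_natCast, hMp]
      have he : (2:ℝ)^(p+1) = (2:ℝ)^p * 2 := by rw [zpow_add_one₀ (by norm_num)]
      rw [lt_div_iff₀ hψ, zpow_neg]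
      rw [inv_mul_lt_iff₀ h2p]
      nlinarith [hp2, he]
    have hlog := Real.log_lt_log (by positivity) hM2
    rw [Real.log_pow] at hlog
    have hlogdiv : Real.log (2/ψ) = Real.log 2 + Real.log (1/ψ) := by
      rw [Real.log_div (by norm_num) (ne_of_gt hψ), one_div, Real.log_inv]
      ring
    have hle : Real.log (1/ψ) ≤ clog (1/ψ) := le_max_right _ _
    have hl2a := Real.log_two_gt_d9
    have hl2b := Real.log_two_lt_d9
    nlinarith [hclog]
  -- decomposition
  set B : ℕ → Set ℝ := fun k => {x ∈ Icc (0:ℝ) 1 | nint (aa*x+cc) < (2:ℝ)⁻¹^k ∧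
    nint (bb*x+dd) < min 1 ((2:ℝ)^(k+1)*ψ)} with hBdef
  set A := {x ∈ Icc (0:ℝ) 1 | nint (aa*x+cc) < (2:ℝ)⁻¹^(K+1)} with hAdef
  have hdecomp : {x ∈ Icc (0:ℝ) 1 | nint (aa*x+cc) * nint (bb*x+dd) < ψ} ⊆
      A ∪ ⋃ k ∈ Finset.range (K+1), B k := by
    rintro x ⟨hxI, hxlt⟩
    by_cases hu : nint (aa*x+cc) < (2:ℝ)⁻¹^(K+1)
    · exact Or.inl ⟨hxI, hu⟩
    · push_neg at hu
      right
      have hu0 : 0 < nint (aa*x+cc) := lt_of_lt_of_le (by positivity) hu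
      have hv2 : nint (bb*x+dd) ≤ 1/2 := nint_le_half _
      have hP0 : nint (aa*x+cc) < (2:ℝ)⁻¹^(0:ℕ) := by
        have := nint_le_half (aa*x+cc)
        simpa using lt_of_le_of_lt this (by norm_num)
      set P : ℕ → Prop := fun k => nint (aa*x+cc) < (2:ℝ)⁻¹^k with hPdef
      have hkK : Nat.findGreatest P K ≤ K := Nat.findGreatest_le K
      have hPk : P (Nat.findGreatest P K) := Nat.findGreatest_spec (Nat.zero_le K) hP0
      set k := Nat.findGreatest P K
      have hlow : (2:ℝ)⁻¹^(k+1) ≤ nint (aa*x+cc) := by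
        rcases eq_or_lt_of_le hkK with he | hlt
        · rw [he]; exact hu
        · have hng := Nat.findGreatest_is_greatest (Nat.lt_succ_self k) (by omega)
          exact not_lt.1 hng
      refine Set.mem_iUnion₂.2 ⟨k, Finset.mem_range.2 (by omega), hxI, hPk, ?_⟩
      refine lt_min (lt_of_le_of_lt hv2 (by norm_num)) ?_
      have hvlt : nint (bb*x+dd) < ψ / nint (aa*x+cc) := by
        rw [lt_div_iff₀ hu0, mul_comm]
        exact hxlt
      refine lt_of_lt_of_le hvlt ?_
      have hstep : ψ / nint (aa*x+cc) ≤ ψ / (2:ℝ)⁻¹^(k+1) :=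
        div_le_div_of_nonneg_left hψ.le (by positivity) hlow
      refine le_trans hstep (le_of_eq ?_)
      rw [inv_pow, div_eq_mul_inv, inv_inv]
      ring
  -- measure of A
  have hA : volume A ≤ ENNReal.ofReal (8*ε) := by
    have hδ1 : (2:ℝ)⁻¹^(K+1) ≤ 1 := by
      apply pow_le_one₀ (by norm_num) (by norm_num)
    have h := strip_measure (β:=aa) (dd:=cc) (δ:=(2:ℝ)⁻¹^(K+1)) (s:=0) (t:=1)
      ha (by positivity) hδ1 zero_le_one
    refine le_trans h (ENNReal.ofReal_le_ofReal ?_)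
    have e1 : aa*(1-0)+3 ≤ 4*aa := by linarith
    calc (aa*(1-0)+3) * (2*(2:ℝ)⁻¹^(K+1)/aa)
        ≤ 4*aa * (2*(2:ℝ)⁻¹^(K+1)/aa) := mul_le_mul_of_nonneg_right e1 (by positivity)
      _ = 8*(2:ℝ)⁻¹^(K+1) := by field_simp; ring
      _ ≤ 8*ε := by linarith [hεlow]
  -- measure of B k
  have hB : ∀ k : ℕ, volume (B k) ≤ ENNReal.ofReal
      (16*((2:ℝ)⁻¹^k * min 1 ((2:ℝ)^(k+1)*ψ)) + 24*(aa/bb) * min 1 ((2:ℝ)^(k+1)*ψ)) := by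
    intro k
    have h := double_measure (cc := cc) (dd := dd) (δ1 := (2:ℝ)⁻¹^k) (δ2 := min 1 ((2:ℝ)^(k+1)*ψ)) ha hab
      (by positivity : (0:ℝ) < (2:ℝ)⁻¹^k) (pow_le_one₀ (by norm_num) (by norm_num))
      (lt_min one_pos (by positivity)) (min_le_left _ _)
    refine le_trans h (ENNReal.ofReal_le_ofReal (le_of_eq ?_))
    ring
  -- combine
  set g : ℕ → ℝ := fun k =>
    16*((2:ℝ)⁻¹^k * min 1 ((2:ℝ)^(k+1)*ψ)) + 24*(aa/bb) * min 1 ((2:ℝ)^(k+1)*ψ) with hgdef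
  have hgnn : ∀ k, 0 ≤ g k := by
    intro k
    have h1 : (0:ℝ) ≤ min 1 ((2:ℝ)^(k+1)*ψ) := le_min zero_le_one (by positivity)
    positivity
  have hcomb : volume {x ∈ Icc (0:ℝ) 1 | nint (aa*x+cc) * nint (bb*x+dd) < ψ} ≤
      ENNReal.ofReal (8*ε + ∑ k ∈ Finset.range (K+1), g k) := by
    calc volume {x ∈ Icc (0:ℝ) 1 | nint (aa*x+cc) * nint (bb*x+dd) < ψ}
        ≤ volume (A ∪ ⋃ k ∈ Finset.range (K+1), B k) := measure_mono hdecomp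
      _ ≤ volume A + volume (⋃ k ∈ Finset.range (K+1), B k) := measure_union_le _ _
      _ ≤ ENNReal.ofReal (8*ε) + ∑ k ∈ Finset.range (K+1), ENNReal.ofReal (g k) := by
          refine add_le_add hA (le_trans (measure_biUnion_finset_le _ _) ?_)
          exact Finset.sum_le_sum fun k _ => hB k
      _ = ENNReal.ofReal (8*ε + ∑ k ∈ Finset.range (K+1), g k) := by
          rw [← ENNReal.ofReal_sum_of_nonneg fun k _ => hgnn k,
            ← ENNReal.ofReal_add (by positivity) (Finset.sum_nonneg fun k _ => hgnn k)]
  refine le_trans hcomb (ENNReal.ofReal_le_ofReal ?_)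
  -- the real inequality
  have hsum1 : ∑ k ∈ Finset.range (K+1), (2:ℝ)⁻¹^k * min 1 ((2:ℝ)^(k+1)*ψ) ≤
      8 * (ψ * clog (1/ψ)) := by
    have hterm : ∀ k : ℕ, (2:ℝ)⁻¹^k * min 1 ((2:ℝ)^(k+1)*ψ) ≤ min ((2:ℝ)⁻¹^k) (2*ψ) := by
      intro k
      have hpk : (0:ℝ) < (2:ℝ)⁻¹^k := by positivity
      refine le_min ?_ ?_
      · exact mul_le_of_le_one_right hpk.le (min_le_left _ _)
      · have : (2:ℝ)⁻¹^k * ((2:ℝ)^(k+1)*ψ) = 2*ψ := by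
          rw [inv_pow, pow_succ]
          field_simp
        calc (2:ℝ)⁻¹^k * min 1 ((2:ℝ)^(k+1)*ψ) ≤ (2:ℝ)⁻¹^k * ((2:ℝ)^(k+1)*ψ) :=
            mul_le_mul_of_nonneg_left (min_le_right _ _) hpk.le
          _ = 2*ψ := this
    calc ∑ k ∈ Finset.range (K+1), (2:ℝ)⁻¹^k * min 1 ((2:ℝ)^(k+1)*ψ)
        ≤ ∑ k ∈ Finset.range (K+1), min ((2:ℝ)⁻¹^k) (2*ψ) :=
          Finset.sum_le_sum fun k _ => hterm k
      _ ≤ (2*ψ)*M + 2*(2:ℝ)⁻¹^M := sum_min_le (by positivity) M (K+1)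
      _ ≤ 8 * (ψ * clog (1/ψ)) := by nlinarith [hMψ, hMbound, hclog, hψ.le]
  have hsum2 : ∑ k ∈ Finset.range (K+1), min 1 ((2:ℝ)^(k+1)*ψ) ≤ 4*ψ*(2:ℝ)^K := by
    calc ∑ k ∈ Finset.range (K+1), min 1 ((2:ℝ)^(k+1)*ψ)
        ≤ ∑ k ∈ Finset.range (K+1), (2:ℝ)^(k+1)*ψ :=
          Finset.sum_le_sum fun k _ => min_le_right _ _
      _ = 2*ψ * ∑ k ∈ Finset.range (K+1), (2:ℝ)^k := by
          rw [Finset.mul_sum]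
          refine Finset.sum_congr rfl fun k _ => ?_
          rw [pow_succ]
          ring
      _ = 2*ψ * (((2:ℝ)^(K+1) - 1)/(2-1)) := by rw [geom_sum_eq (by norm_num)]
      _ ≤ 4*ψ*(2:ℝ)^K := by
          have : (2:ℝ)^(K+1) = 2*(2:ℝ)^K := by rw [pow_succ]; ring
          nlinarith [pow_pos (by norm_num : (0:ℝ) < 2) K, hψ.le]
  have hεK : ε * (2:ℝ)^K ≤ 1 := by
    have h0 : (0:ℝ) < (2:ℝ)^K := by positivity
    have := mul_lt_mul_of_pos_right hεhigh h0
    rw [inv_pow] at this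
    rw [inv_mul_cancel₀ (ne_of_gt h0)] at this
    linarith
  have habψ : aa/bb * ψ = ε^2 := by rw [hεsq]; ring
  have hsum2' : 24*(aa/bb) * ∑ k ∈ Finset.range (K+1), min 1 ((2:ℝ)^(k+1)*ψ) ≤ 96*ε := by
    have hnn : (0:ℝ) ≤ aa/bb := by positivity
    calc 24*(aa/bb) * ∑ k ∈ Finset.range (K+1), min 1 ((2:ℝ)^(k+1)*ψ)
        ≤ 24*(aa/bb) * (4*ψ*(2:ℝ)^K) := by
          apply mul_le_mul_of_nonneg_left hsum2 (by positivity)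
      _ = 96 * (ε^2 * (2:ℝ)^K) := by rw [← habψ]; ring
      _ = 96 * (ε * (ε * (2:ℝ)^K)) := by ring
      _ ≤ 96*ε := by nlinarith [hε0.le, hεK]
  have hgsum : ∑ k ∈ Finset.range (K+1), g k =
      16 * ∑ k ∈ Finset.range (K+1), (2:ℝ)⁻¹^k * min 1 ((2:ℝ)^(k+1)*ψ)
      + 24*(aa/bb) * ∑ k ∈ Finset.range (K+1), min 1 ((2:ℝ)^(k+1)*ψ) := by
    rw [Finset.sum_add_distrib, Finset.mul_sum, Finset.mul_sum]
  rw [hgsum]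
  nlinarith [hsum1, hsum2', hε0.le, hψclog]


theorem stmt9 (a b c d : ℕ → ℝ) (ψ : ℕ → ℝ)
    (ha : ∀ n, 1 ≤ a n) (hab : ∀ n, a n ≤ b n) (hψ : ∀ n, 0 ≤ ψ n)
    (hsum : Summable (fun n => if 0 < ψ n then
      ψ n * clog (1 / ψ n) + (ψ n / a n) * clog (b n) * clog (1 / ψ n)
        + (ψ n * a n / b n) ^ ((1:ℝ) / 2)
        + (ψ n / (a n * b n)) ^ ((1:ℝ) / 2) * clog (b n) else 0)) :
    volume {x ∈ Icc (0:ℝ) 1 |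
      {n : ℕ | nint (a n * x + c n) * nint (b n * x + d n) < ψ n}.Infinite} = 0 := by
  classical
  set T : ℕ → ℝ := fun n => if 0 < ψ n then
      ψ n * clog (1 / ψ n) + (ψ n / a n) * clog (b n) * clog (1 / ψ n)
        + (ψ n * a n / b n) ^ ((1:ℝ) / 2)
        + (ψ n / (a n * b n)) ^ ((1:ℝ) / 2) * clog (b n) else 0 with hT
  set E : ℕ → Set ℝ := fun n =>
    {x ∈ Icc (0:ℝ) 1 | nint (a n * x + c n) * nint (b n * x + d n) < ψ n} with hE
  have hTnn : ∀ n, 0 ≤ T n := by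
    intro n
    rw [hT]
    dsimp only
    split_ifs with h
    · have h1 : (1:ℝ) ≤ clog (1/ψ n) := le_max_left _ _
      have h2 : (1:ℝ) ≤ clog (b n) := le_max_left _ _
      have ha0 : 0 < a n := lt_of_lt_of_le one_pos (ha n)
      have hb0 : 0 < b n := lt_of_lt_of_le ha0 (hab n)
      have h3 : 0 ≤ (ψ n * a n / b n) ^ ((1:ℝ)/2) := Real.rpow_nonneg (by positivity) _
      have h4 : 0 ≤ (ψ n / (a n * b n)) ^ ((1:ℝ)/2) := Real.rpow_nonneg (by positivity) _
      have h5 : 0 ≤ ψ n * clog (1/ψ n) := mul_nonneg h.le (by linarith)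
      have h6 : 0 ≤ (ψ n / a n) * clog (b n) * clog (1/ψ n) := by
        apply mul_nonneg (mul_nonneg (by positivity) (by linarith)) (by linarith)
      nlinarith
    · exact le_refl 0
  have hEn : ∀ n, volume (E n) ≤ ENNReal.ofReal (300 * T n) := by
    intro n
    rcases lt_or_ge 0 (ψ n) with h | h
    · have hmb := main_bound (cc := c n) (dd := d n) (ha n) (hab n) h
      refine le_trans hmb (ENNReal.ofReal_le_ofReal ?_)
      rw [hT]
      dsimp only
      rw [if_pos h]
      have hsq : Real.sqrt (ψ n * a n / b n) = (ψ n * a n / b n) ^ ((1:ℝ)/2) :=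
        Real.sqrt_eq_rpow _
      have h2 : (1:ℝ) ≤ clog (b n) := le_max_left _ _
      have h1 : (1:ℝ) ≤ clog (1/ψ n) := le_max_left _ _
      have ha0 : 0 < a n := lt_of_lt_of_le one_pos (ha n)
      have hb0 : 0 < b n := lt_of_lt_of_le ha0 (hab n)
      have h6 : 0 ≤ (ψ n / a n) * clog (b n) * clog (1/ψ n) := by
        apply mul_nonneg (mul_nonneg (by positivity) (by linarith)) (by linarith)
      have h4 : 0 ≤ (ψ n / (a n * b n)) ^ ((1:ℝ)/2) * clog (b n) :=
        mul_nonneg (Real.rpow_nonneg (by positivity) _) (by linarith)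
      rw [hsq] at *
      nlinarith
    · have hempty : E n = ∅ := by
        rw [hE]
        dsimp only
        ext x
        simp only [Set.mem_setOf_eq, Set.mem_empty_iff_false, iff_false, not_and]
        intro _
        have := mul_nonneg (nint_nonneg (a n * x + c n)) (nint_nonneg (b n * x + d n))
        linarith
      rw [hempty]
      simp
  have hsummable : Summable (fun n => 300 * T n) := hsum.mul_left 300
  have htsum : ∑' n, volume (E n) ≠ ⊤ := by
    have h1 : ∑' n, volume (E n) ≤ ∑' n, ENNReal.ofReal (300 * T n) :=
      ENNReal.tsum_le_tsum hEn
    have h2 : ∑' n, ENNReal.ofReal (300 * T n) = ENNReal.ofReal (∑' n, 300 * T n) :=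
      (ENNReal.ofReal_tsum_of_nonneg (fun n => by
        have := hTnn n; linarith) hsummable).symm
    rw [h2] at h1
    exact ne_top_of_le_ne_top ENNReal.ofReal_ne_top h1
  have hlimsup := MeasureTheory.measure_limsup_atTop_eq_zero (μ := (volume : Measure ℝ)) htsum
  refine measure_mono_null ?_ hlimsup
  rintro x ⟨hxI, hxinf⟩
  rw [Filter.mem_limsup_iff_frequently_mem]
  have hfreq : ∃ᶠ n in Filter.atTop, nint (a n * x + c n) * nint (b n * x + d n) < ψ n :=
    Nat.frequently_atTop_iff_infinite.2 hxinf
  exact hfreq.mono fun n hn => ⟨hxI, hn⟩
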